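/- If 2·P_hH − P_lL − P_lL·P_hH < 0, then for all real α with 1/2 < α ≤ 1/(2·P_lL), 1 − α − γ*(α) ≥ γ*(α). If 2·P_hH − P_lL − P_lL·P_hH ≥ 0, then for all real α with 1/2 < α ≤ min(1/(2·P_lL), B), 1 − α − γ*(α) ≥ γ*(α), where B = (P_lH² + 2·P_lL² − P_lH·P_hH·P_lL)/(P_lH² + 4·P_lL² − 4·P_lH·P_hH·P_lL) − P_lH·√(P_lH·P_lL·(2·P_hH − P_lL − P_lL·P_hH))/(P_lH² + 4·P_lL² − 4·P_lH·P_hH·P_lL). -/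

import Mathlib

/-- b*(α): the maximizer of ξ̂ in the non-linear regime. -/
noncomputable def bStar (PlH PlL α : ℝ) : ℝ :=
  (1 - 2 * α) +
    Real.sqrt (2 * (1 - α * PlH) * (1 - 2 * α * PlL) * PlL * PlH) / (PlL * PlH)

/-- γ*(α): the fraction of type-0 minority agents achieving ξ_h = ξ_l at b = b*(α). -/
noncomputable def gammaStar (PhH PlH PhL PlL α : ℝ) : ℝ :=
  ((1 / 2) * (PlL * bStar PlH PlL α + 2 - PlL)
      - α * (PhH * PlL + PlH * PlL * bStar PlH PlL α + PlH)) /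
    ((PlL * bStar PlH PlL α + PhL) * (PlH * bStar PlH PlL α + PhH + 1))

set_option maxHeartbeats 1000000

private lemma hid_aux (p q α s B D N : ℝ)
    (hD2 : (p*q) * D = ((p*q*(1-2*α)+s) + q*(1-p)) * ((p*q*(1-2*α)+s) + p*(2-q)))
    (hN2 : 2*(p*q) * N
        = p*(p*q*(1-2*α)+s) + p*(2-p)*q - 2*α*p*((1-q)*p*q + q*(p*q*(1-2*α)+s) + q^2))
    (hBdef : B = q*(1-α) + p*(1-2*α)*(1-2*q*α)) :
    p*q*((1-α)*D - 2*N)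
        = (1-α)*s^2 + B*s - α*(2 * (1 - α * q) * (1 - 2 * α * p) * p * q) := by
  subst hBdef
  linear_combination (1-α) * hD2 - hN2

lemma key_lemma (p q α : ℝ) (hp1 : 1/2 < p) (hp2 : p < 1) (hq1 : 1 - p ≤ q) (hq2 : q < p)
    (hα : 1/2 < α) (hα2 : 2 * p * α ≤ 1)
    (hG : ∀ c : ℝ, 1/2 ≤ c → c ≤ α →
      0 ≤ q^2*(1-c)^2 + 2*p*q*(1-q)*c*(1-2*c) + p^2*(1-2*c)^2) :
    gammaStar (1-q) q (1-p) p α ≤ 1 - α - gammaStar (1-q) q (1-p) p α := by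
  have hq0 : 0 < q := by linarith
  have hp0 : 0 < p := by linarith
  have hpq : 0 < p * q := mul_pos hp0 hq0
  have hpqne : p * q ≠ 0 := ne_of_gt hpq
  have hα1 : α < 1 := by nlinarith
  have hSa : 0 ≤ 1 - α * q := by nlinarith
  have hSb : 0 ≤ 1 - 2 * α * p := by nlinarith
  have hS0 : 0 ≤ 2 * (1 - α * q) * (1 - 2 * α * p) * p * q := by positivity
  set s : ℝ := Real.sqrt (2 * (1 - α * q) * (1 - 2 * α * p) * p * q) with hsdef
  have hs0 : 0 ≤ s := Real.sqrt_nonneg _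
  have hs2 : s ^ 2 = 2 * (1 - α * q) * (1 - 2 * α * p) * p * q := Real.sq_sqrt hS0
  have hb : bStar q p α = (1 - 2*α) + s / (p * q) := by
    rw [hsdef]; rfl
  clear_value s
  rcases eq_or_lt_of_le hα2 with heq | hlt
  · -- boundary case: 2pα = 1, denominator vanishes, gammaStar = 0
    have hz : 1 - 2 * α * p = 0 := by linarith
    have hSz : 2 * (1 - α * q) * (1 - 2 * α * p) * p * q = 0 := by rw [hz]; ring
    have hsz : s = 0 := by rw [hsdef, hSz, Real.sqrt_zero]
    have hbz : bStar q p α = 1 - 2*α := by rw [hb, hsz]; field_simp; ring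
    have hden : (p * bStar q p α + (1-p)) * (q * bStar q p α + (1-q) + 1) = 0 := by
      rw [hbz]
      have h0 : p * (1 - 2*α) + (1 - p) = 0 := by nlinarith
      nlinarith [h0]
    rw [gammaStar, hden, div_zero]
    nlinarith
  · -- interior case: 2pα < 1
    have hSb' : 0 < 1 - 2 * α * p := by nlinarith
    have hSa' : 0 < 1 - α * q := by nlinarith
    have hSpos : 0 < 2 * (1 - α * q) * (1 - 2 * α * p) * p * q := by positivity
    have hspos : 0 < s := by rw [hsdef]; exact Real.sqrt_pos.mpr hSpos
    set b : ℝ := bStar q p α with hbdef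
    set N : ℝ := (1 / 2) * (p * b + 2 - p) - α * ((1-q) * p + q * p * b + q) with hNdef
    set D : ℝ := (p * b + (1-p)) * (q * b + (1-q) + 1) with hDdef
    set B : ℝ := q*(1-α) + p*(1-2*α)*(1-2*q*α) with hBdef
    clear_value b N D B
    -- B ≥ 0 by IVT contradiction
    have hBnn : 0 ≤ B := by
      by_contra hneg
      push_neg at hneg
      set f : ℝ → ℝ := fun c => q*(1-c) + p*(1-2*c)*(1-2*q*c) with hfdef
      have hcont : ContinuousOn f (Set.Icc (1/2) α) := by fun_prop
      have hfα : f α = B := by rw [hfdef, hBdef]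
      have hmem : (0:ℝ) ∈ Set.Icc (f α) (f (1/2)) := by
        constructor
        · rw [hfα]; exact le_of_lt hneg
        · have hf12 : f (1/2) = q/2 := by simp only [hfdef]; ring
          rw [hf12]; positivity
      obtain ⟨c, hc, hfc⟩ := intermediate_value_Icc' (le_of_lt hα) hcont hmem
      obtain ⟨hc1, hc2⟩ := hc
      have hGc := hG c hc1 hc2
      have hfc' : q*(1-c) + p*(1-2*c)*(1-2*q*c) = 0 := by
        have : f c = q*(1-c) + p*(1-2*c)*(1-2*q*c) := by rw [hfdef]
        rw [← this, hfc]
      have hc12 : 1/2 < c := by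
        rcases eq_or_lt_of_le hc1 with h | h
        · exfalso; rw [← h] at hfc'; nlinarith
        · exact h
      have h1 : 0 < 1 - 2 * c * p := by nlinarith
      have h2 : 0 < 1 - c * q := by nlinarith
      have hGidc : q^2*(1-c)^2 + 2*p*q*(1-q)*c*(1-2*c) + p^2*(1-2*c)^2
          = (q*(1-c) + p*(1-2*c)*(1-2*q*c))^2
            - (2*c-1)^2 * (2*(1-c*q)*(1-2*c*p)*p*q) := by ring
      rw [hGidc, hfc'] at hGc
      have hsq : 0 < (2*c-1)^2 := pow_pos (by linarith) 2
      have hSc : 0 < 2*(1-c*q)*(1-2*c*p)*p*q := by positivity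
      linarith [mul_pos hsq hSc]
    -- key: B ≥ (2α-1)s
    have hGα := hG α (le_of_lt hα) le_rfl
    have hGid : q^2*(1-α)^2 + 2*p*q*(1-q)*α*(1-2*α) + p^2*(1-2*α)^2
        = B^2 - (2*α-1)^2 * (2 * (1 - α * q) * (1 - 2 * α * p) * p * q) := by
      rw [hBdef]; ring
    rw [hGid] at hGα
    have hBs : (2*α-1) * s ≤ B := by
      by_contra hcon
      push_neg at hcon
      have h2 := mul_self_lt_mul_self hBnn hcon
      have hX2 : ((2*α-1)*s)*((2*α-1)*s)
          = (2*α-1)^2 * (2 * (1 - α * q) * (1 - 2 * α * p) * p * q) := by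
        rw [← hs2]; ring
      have hB2 : B*B = B^2 := by ring
      linarith [hGα, h2, hX2, hB2]
    -- denominator positive
    have hf1 : 0 < q * (p * b + (1-p)) := by
      have h : q * (p * b + (1-p)) = p*q*(1-2*α) + s + q*(1-p) := by
        rw [hb]; field_simp
      rw [h]; nlinarith
    have hf2 : 0 < p * (q * b + (1-q) + 1) := by
      have h : p * (q * b + (1-q) + 1) = p*q*(1-2*α) + s + p*(2-q) := by
        rw [hb]; field_simp; ring
      rw [h]; nlinarith
    have hpqD : 0 < (p*q) * D := by
      have h : (p*q) * D = (q * (p * b + (1-p))) * (p * (q * b + (1-q) + 1)) := by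
        rw [hDdef]; ring
      rw [h]; exact mul_pos hf1 hf2
    have hD0 : 0 < D := by
      by_contra h
      push_neg at h
      have h2 : 0 ≤ p*q*(-D) := mul_nonneg hpq.le (neg_nonneg.mpr h)
      linarith [hpqD, h2]
    -- the master identity
    have hu : p * q * b = p*q*(1-2*α) + s := by
      rw [hb]; field_simp
    have hD2 : (p*q) * D = ((p*q*(1-2*α)+s) + q*(1-p)) * ((p*q*(1-2*α)+s) + p*(2-q)) := by
      rw [hDdef]
      linear_combination (p*q*b + (p*q*(1-2*α)+s) + q*(1-p) + p*(2-q)) * hu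
    have hN2 : 2*(p*q) * N
        = p*(p*q*(1-2*α)+s) + p*(2-p)*q - 2*α*p*((1-q)*p*q + q*(p*q*(1-2*α)+s) + q^2) := by
      rw [hNdef]
      linear_combination (p - 2*α*p*q) * hu
    have hid : p*q*((1-α)*D - 2*N)
        = (1-α)*s^2 + B*s - α*(2 * (1 - α * q) * (1 - 2 * α * p) * p * q) := by
      exact hid_aux p q α s B D N hD2 hN2 hBdef
    have h1 : (2*α-1)*s*s ≤ B*s := mul_le_mul_of_nonneg_right hBs hs0
    have hs2' : α * (2 * (1 - α * q) * (1 - 2 * α * p) * p * q) = α * s^2 := by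
      rw [hs2]
    have hEnn : 0 ≤ (1-α)*s^2 + B*s - α*(2 * (1 - α * q) * (1 - 2 * α * p) * p * q) := by
      linarith [h1, hs2']
    have hX : 0 ≤ (1-α)*D - 2*N := by
      by_contra h
      push_neg at h
      have := mul_neg_of_pos_of_neg hpq h
      linarith [hid, hEnn]
    have hgs : gammaStar (1-q) q (1-p) p α = N / D := by
      rw [hNdef, hDdef, hbdef]; rfl
    rw [hgs]
    have hND : N / D ≤ (1-α)/2 := by
      rw [div_le_div_iff₀ hD0 two_pos]; linarith
    linarith


/-- the regions of α on which 1 - α - γ*(α) ≥ γ*(α) holds. -/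
theorem stmt_18 (PhH PlH PhL PlL : ℝ)
    (hPhL : 0 < PhL) (hhh : PhL < PhH) (hHL : PhH ≤ PlL) (hPlL : PlL < 1)
    (hsH : PhH + PlH = 1) (hsL : PhL + PlL = 1) :
    (2 * PhH - PlL - PlL * PhH < 0 →
      ∀ α : ℝ, 1 / 2 < α → α ≤ 1 / (2 * PlL) →
        gammaStar PhH PlH PhL PlL α ≤ 1 - α - gammaStar PhH PlH PhL PlL α) ∧
    (0 ≤ 2 * PhH - PlL - PlL * PhH →
      ∀ α : ℝ, 1 / 2 < α →
        α ≤ min (1 / (2 * PlL))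
          ((PlH ^ 2 + 2 * PlL ^ 2 - PlH * PhH * PlL)
              / (PlH ^ 2 + 4 * PlL ^ 2 - 4 * PlH * PhH * PlL)
            - PlH * Real.sqrt (PlH * PlL * (2 * PhH - PlL - PlL * PhH))
              / (PlH ^ 2 + 4 * PlL ^ 2 - 4 * PlH * PhH * PlL)) →
        gammaStar PhH PlH PhL PlL α ≤ 1 - α - gammaStar PhH PlH PhL PlL α) := by
  have e1 : PhH = 1 - PlH := by linarith
  have e2 : PhL = 1 - PlL := by linarith
  subst e1 e2
  have hq2 : PlH < PlL := by linarith
  have hq1 : 1 - PlL ≤ PlH := by linarith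
  have hp1 : 1/2 < PlL := by linarith
  have hq0 : 0 < PlH := by linarith
  have hp0 : 0 < PlL := by linarith
  have hL0 : 0 < PlH^2 + 4*PlL^2 - 4*PlH*(1-PlH)*PlL := by
    nlinarith [sq_nonneg (PlH - 2*PlL), mul_pos (mul_pos hp0 hq0) hq0]
  constructor
  · intro hcond α hα hαle
    have hα2 : 2 * PlL * α ≤ 1 := by
      rw [le_div_iff₀ (by linarith : (0:ℝ) < 2*PlL)] at hαle; linarith
    apply key_lemma PlL PlH α hp1 hPlL hq1 hq2 hα hα2
    intro c hc1 hc2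
    have hGL : (PlH^2*(1-c)^2 + 2*PlL*PlH*(1-PlH)*c*(1-2*c) + PlL^2*(1-2*c)^2)
          * (PlH^2+4*PlL^2-4*PlH*(1-PlH)*PlL)
        = ((PlH^2+4*PlL^2-4*PlH*(1-PlH)*PlL)*c - (PlH^2+2*PlL^2-PlH*(1-PlH)*PlL))^2
          - PlH^3*PlL*(2*(1-PlH) - PlL - PlL*(1-PlH)) := by ring
    have hpos : 0 < PlH^3*PlL*(-(2*(1-PlH) - PlL - PlL*(1-PlH))) :=
      mul_pos (by positivity) (by linarith)
    by_contra h
    push_neg at h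
    have h3 := mul_neg_of_neg_of_pos h hL0
    linarith [hGL, hpos, h3,
      sq_nonneg ((PlH^2+4*PlL^2-4*PlH*(1-PlH)*PlL)*c - (PlH^2+2*PlL^2-PlH*(1-PlH)*PlL))]
  · intro hcond α hα hαle
    rw [le_min_iff] at hαle
    obtain ⟨hαle1, hαB⟩ := hαle
    have hα2 : 2 * PlL * α ≤ 1 := by
      rw [le_div_iff₀ (by linarith : (0:ℝ) < 2*PlL)] at hαle1; linarith
    apply key_lemma PlL PlH α hp1 hPlL hq1 hq2 hα hα2
    intro c hc1 hc2
    set r := Real.sqrt (PlH * PlL * (2 * (1-PlH) - PlL - PlL * (1-PlH))) with hrdef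
    have hr0 : 0 ≤ r := Real.sqrt_nonneg _
    have hr2 : r^2 = PlH * PlL * (2 * (1-PlH) - PlL - PlL * (1-PlH)) := by
      rw [hrdef]
      exact Real.sq_sqrt (mul_nonneg (mul_nonneg hq0.le hp0.le) hcond)
    clear_value r
    have hαB' : α ≤ ((PlH^2+2*PlL^2-PlH*(1-PlH)*PlL) - PlH*r)
        / (PlH^2+4*PlL^2-4*PlH*(1-PlH)*PlL) := by
      rw [sub_div]; exact hαB
    rw [le_div_iff₀ hL0] at hαB'
    have hqr : 0 ≤ PlH * r := mul_nonneg hq0.le hr0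
    have hLc : (PlH^2+4*PlL^2-4*PlH*(1-PlH)*PlL) * c
        ≤ (PlH^2+2*PlL^2-PlH*(1-PlH)*PlL) - PlH*r := by
      have := mul_le_mul_of_nonneg_left hc2 hL0.le
      linarith
    have hsq : (PlH*r)^2 ≤ ((PlH^2+2*PlL^2-PlH*(1-PlH)*PlL)
        - (PlH^2+4*PlL^2-4*PlH*(1-PlH)*PlL) * c)^2 := by
      have hle : PlH*r ≤ (PlH^2+2*PlL^2-PlH*(1-PlH)*PlL)
          - (PlH^2+4*PlL^2-4*PlH*(1-PlH)*PlL) * c := by linarith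
      exact pow_le_pow_left₀ hqr hle 2
    have hr2' : (PlH*r)^2 = PlH^2 * (PlH * PlL * (2 * (1-PlH) - PlL - PlL * (1-PlH))) := by
      rw [mul_pow, hr2]
    have hGL : (PlH^2*(1-c)^2 + 2*PlL*PlH*(1-PlH)*c*(1-2*c) + PlL^2*(1-2*c)^2)
          * (PlH^2+4*PlL^2-4*PlH*(1-PlH)*PlL)
        = ((PlH^2+2*PlL^2-PlH*(1-PlH)*PlL) - (PlH^2+4*PlL^2-4*PlH*(1-PlH)*PlL)*c)^2
          - PlH^2*(PlH * PlL * (2 * (1-PlH) - PlL - PlL * (1-PlH))) := by ring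
    by_contra h
    push_neg at h
    have h3 := mul_neg_of_neg_of_pos h hL0
    linarith [hGL, hsq, hr2', h3]
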